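/- (Proposition: orthogonal asymptotes of directional corner points) Let γ = max(α, d), assume γ ≠ 1, and assume either (d < α and A ≠ 0) or (α < d and p ≠ 0). Then as n → ∞ along even n ≥ 2 the slope (Y(n+4) − Y n)/(X(n+4) − X n) = (Γ(n+3) − Γ(n−1))/(Γ(n+4) − Γ n) tends to −1/γ, and as n → ∞ along odd n the slope (Y(n+4) − Y n)/(X(n+4) − X n) = (Γ(n+4) − Γ n)/(Γ(n+3) − Γ(n−1)) tends to γ; in particular the product of the two limiting slopes equals −1, so the oblique asymptotes through the even-indexed and the odd-indexed directional corner points are mutually orthogonal. -/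

import Mathlib

private lemma div_div_same' (x y c : ℝ) (hc : c ≠ 0) : (x/c)/(y/c) = x/y := by
  rcases eq_or_ne y 0 with h|h
  · simp [h]
  · field_simp

theorem stmt_10 (a b c d : ℝ) (ha : 0 < a) (hb : 0 < b) (hc : 0 ≤ c) (hd : 0 ≤ d)
    (hden : d^2 - a*d - b ≠ 0)
    (α β p : ℝ)
    (hα : α = (a + Real.sqrt (a^2 + 4*b)) / 2)
    (hβ : β = (a - Real.sqrt (a^2 + 4*b)) / 2)
    (hp : p = c * d^2 / (d^2 - a*d - b))
    (G : ℕ → ℝ)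
    (hG : ∀ n : ℕ, 2 ≤ n → G n = a * G (n-1) + b * G (n-2) + c * d^n)
    (H0 H1 A B : ℝ)
    (hH0 : H0 = G 0 - p) (hH1 : H1 = G 1 - p*d)
    (hA : A = (H1 - H0*β) / (α - β))
    (hB : B = -((H1 - H0*α) / (α - β)))
    (Γ : ℕ → ℝ)
    (hΓeven : ∀ n : ℕ, Even n →
      Γ n = ∑ k ∈ Finset.range (n/2 + 1), (-1:ℝ)^k * G (2*k))
    (hΓodd : ∀ n : ℕ, Odd n →
      Γ n = ∑ k ∈ Finset.range ((n-1)/2 + 1), (-1:ℝ)^k * G (2*k+1))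
    (γ : ℝ) (hγ : γ = max α d) (hγ1 : γ ≠ 1)
    (hcase : (d < α ∧ A ≠ 0) ∨ (α < d ∧ p ≠ 0)) :
    Filter.Tendsto
        (fun m : ℕ => (Γ (2*m+5) - Γ (2*m+1)) / (Γ (2*m+6) - Γ (2*m+2)))
        Filter.atTop (nhds (-1/γ))
    ∧ Filter.Tendsto
        (fun m : ℕ => (Γ (2*m+5) - Γ (2*m+1)) / (Γ (2*m+4) - Γ (2*m)))
        Filter.atTop (nhds γ)
    ∧ (-1/γ) * γ = -1 := by
  -- basic facts about α, β
  set s := Real.sqrt (a^2 + 4*b) with hs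
  have hs2 : s^2 = a^2 + 4*b := Real.sq_sqrt (by positivity)
  have hspos : 0 < s := Real.sqrt_pos.mpr (by positivity)
  have hsa : a < s := by nlinarith
  have hαpos : 0 < α := by rw [hα]; linarith
  have hβneg : β < 0 := by rw [hβ]; linarith
  have hαβsum : α + β = a := by rw [hα, hβ]; ring
  have habsβ : |β| < α := abs_lt.mpr ⟨by linarith, by linarith⟩
  have hαβne : α - β ≠ 0 := by rw [hα, hβ]; intro h; nlinarith
  have hquadα : α^2 = a*α + b := by rw [hα]; linear_combination hs2/4
  have hquadβ : β^2 = a*β + b := by rw [hβ]; linear_combination hs2/4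
  have hpd : p*d^2 = a*(p*d) + b*p + c*d^2 := by
    rw [hp]
    have key : c*d^2/(d^2-a*d-b) * (d^2-a*d-b) = c*d^2 := div_mul_cancel₀ _ hden
    linear_combination key
  have hγpos : 0 < γ := by
    rw [hγ]; exact lt_of_lt_of_le hαpos (le_max_left _ _)
  have hγne : γ ≠ 0 := ne_of_gt hγpos
  -- closed form
  have h0 : G 0 = A + B + p := by
    rw [hA, hB, hH0, hH1]; field_simp; ring
  have h1 : G 1 = A*α + B*β + p*d := by
    rw [hA, hB, hH0, hH1]; field_simp; ring
  have hGn : ∀ n : ℕ, G n = A*α^n + B*β^n + p*d^n := by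
    intro n
    induction n using Nat.twoStepInduction with
    | zero => simpa using h0
    | one => simpa using h1
    | more n ih1 ih2 =>
      have h := hG (n+2) (by omega)
      have e1 : n+2-1 = n+1 := by omega
      have e2 : n+2-2 = n := by omega
      rw [e1, e2, ih1, ih2] at h
      rw [h]
      linear_combination (-(A*α^n))*hquadα + (-(B*β^n))*hquadβ + (-(d^n))*hpd
  have hD : ∀ n : ℕ, G (n+2) - G n
      = A*(α^2-1)*α^n + B*(β^2-1)*β^n + p*(d^2-1)*d^n := by
    intro n; rw [hGn, hGn]; ring
  -- extract the dominant-term decomposition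
  obtain ⟨C, Cx, Cy, x, y, hC0, hxlt, hylt, hDC⟩ :
      ∃ C Cx Cy x y : ℝ, C ≠ 0 ∧ |x| < γ ∧ |y| < γ ∧
        ∀ n : ℕ, G (n+2) - G n = C*γ^n + Cx*x^n + Cy*y^n := by
    rcases hcase with ⟨hdα, hA0⟩ | ⟨hαd, hp0⟩
    · have hγα : γ = α := by rw [hγ]; exact max_eq_left hdα.le
      refine ⟨A*(α^2-1), B*(β^2-1), p*(d^2-1), β, d, ?_, ?_, ?_, ?_⟩
      · have hα1 : α ≠ 1 := by rw [← hγα]; exact hγ1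
        have h2 : α^2 - 1 ≠ 0 := by
          have e : α^2 - 1 = (α-1)*(α+1) := by ring
          rw [e]
          exact mul_ne_zero (sub_ne_zero.mpr hα1) (ne_of_gt (by linarith))
        exact mul_ne_zero hA0 h2
      · rw [hγα]; exact habsβ
      · rw [hγα, abs_of_nonneg hd]; exact hdα
      · intro n; rw [hγα]; exact hD n
    · have hγd : γ = d := by rw [hγ]; exact max_eq_right hαd.le
      refine ⟨p*(d^2-1), A*(α^2-1), B*(β^2-1), α, β, ?_, ?_, ?_, ?_⟩
      · have hd1 : d ≠ 1 := by rw [← hγd]; exact hγ1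
        have h2 : d^2 - 1 ≠ 0 := by
          have e : d^2 - 1 = (d-1)*(d+1) := by ring
          rw [e]
          exact mul_ne_zero (sub_ne_zero.mpr hd1) (ne_of_gt (by linarith))
        exact mul_ne_zero hp0 h2
      · rw [hγd, abs_of_pos hαpos]; exact hαd
      · rw [hγd]; exact lt_trans habsβ hαd
      · intro n; rw [hγd, hGn, hGn]; ring
  -- the normalized limit
  have hx1 : |x/γ| < 1 := by
    rw [abs_div, abs_of_pos hγpos]; exact (div_lt_one hγpos).mpr hxlt
  have hy1 : |y/γ| < 1 := by
    rw [abs_div, abs_of_pos hγpos]; exact (div_lt_one hγpos).mpr hylt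
  have t1 : Filter.Tendsto (fun n : ℕ => (x/γ)^n) Filter.atTop (nhds 0) :=
    tendsto_pow_atTop_nhds_zero_of_abs_lt_one hx1
  have t2 : Filter.Tendsto (fun n : ℕ => (y/γ)^n) Filter.atTop (nhds 0) :=
    tendsto_pow_atTop_nhds_zero_of_abs_lt_one hy1
  have L : Filter.Tendsto (fun n : ℕ => (G (n+2) - G n)/γ^n) Filter.atTop (nhds C) := by
    have key : Filter.Tendsto (fun n : ℕ => C + Cx*(x/γ)^n + Cy*(y/γ)^n)
        Filter.atTop (nhds (C + Cx*0 + Cy*0)) :=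
      (((t1.const_mul Cx).const_add C).add (t2.const_mul Cy))
    have keyval : C + Cx*0 + Cy*0 = C := by ring
    rw [← keyval]
    refine key.congr (fun n => ?_)
    have hγn : (γ:ℝ)^n ≠ 0 := pow_ne_zero _ hγne
    rw [hDC n]
    field_simp
    simp only [add_mul, mul_assoc, div_pow, div_mul_cancel₀ _ hγn]
  have hm : ∀ k : ℕ, Filter.Tendsto (fun m : ℕ => 2*m+k) Filter.atTop Filter.atTop :=
    fun k => Filter.tendsto_atTop_atTop.mpr (fun b => ⟨b, fun n hn => by omega⟩)
  have L2 : Filter.Tendsto (fun m : ℕ => (G (2*m+4) - G (2*m+2))/γ^(2*m+2))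
      Filter.atTop (nhds C) := by
    have := L.comp (hm 2)
    exact this.congr (fun m => by simp [Function.comp])
  have L3 : Filter.Tendsto (fun m : ℕ => (G (2*m+5) - G (2*m+3))/γ^(2*m+3))
      Filter.atTop (nhds C) := by
    have := L.comp (hm 3)
    exact this.congr (fun m => by simp [Function.comp])
  have L4 : Filter.Tendsto (fun m : ℕ => (G (2*m+6) - G (2*m+4))/γ^(2*m+4))
      Filter.atTop (nhds C) := by
    have := L.comp (hm 4)
    exact this.congr (fun m => by simp [Function.comp])
  -- Γ difference identities
  have hΓo : ∀ m : ℕ, Γ (2*m+5) - Γ (2*m+1) = (-1:ℝ)^m * (G (2*m+5) - G (2*m+3)) := by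
    intro m
    have h1 := hΓodd (2*m+5) ⟨m+2, by omega⟩
    have h2 := hΓodd (2*m+1) ⟨m, by omega⟩
    have e1 : (2*m+5-1)/2+1 = m+3 := by omega
    have e2 : (2*m+1-1)/2+1 = m+1 := by omega
    rw [e1] at h1; rw [e2] at h2
    rw [h1, h2, Finset.sum_range_succ, Finset.sum_range_succ]
    have i1 : 2*(m+1)+1 = 2*m+3 := by omega
    have i2 : 2*(m+2)+1 = 2*m+5 := by omega
    rw [i1, i2]
    ring
  have hΓe2 : ∀ m : ℕ, Γ (2*m+6) - Γ (2*m+2) = (-1:ℝ)^m * (G (2*m+4) - G (2*m+6)) := by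
    intro m
    have h1 := hΓeven (2*m+6) ⟨m+3, by omega⟩
    have h2 := hΓeven (2*m+2) ⟨m+1, by omega⟩
    have e1 : (2*m+6)/2+1 = m+4 := by omega
    have e2 : (2*m+2)/2+1 = m+2 := by omega
    rw [e1] at h1; rw [e2] at h2
    rw [h1, h2, Finset.sum_range_succ, Finset.sum_range_succ]
    have i1 : 2*(m+2) = 2*m+4 := by omega
    have i2 : 2*(m+3) = 2*m+6 := by omega
    rw [i1, i2]
    ring
  have hΓe0 : ∀ m : ℕ, Γ (2*m+4) - Γ (2*m) = (-1:ℝ)^m * (G (2*m+4) - G (2*m+2)) := by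
    intro m
    have h1 := hΓeven (2*m+4) ⟨m+2, by omega⟩
    have h2 := hΓeven (2*m) ⟨m, by omega⟩
    have e1 : (2*m+4)/2+1 = m+3 := by omega
    have e2 : (2*m)/2+1 = m+1 := by omega
    rw [e1] at h1; rw [e2] at h2
    rw [h1, h2, Finset.sum_range_succ, Finset.sum_range_succ]
    have i1 : 2*(m+1) = 2*m+2 := by omega
    have i2 : 2*(m+2) = 2*m+4 := by omega
    rw [i1, i2]
    ring
  -- second limit (slope γ)
  have num2 : Filter.Tendsto (fun m : ℕ => (G (2*m+5) - G (2*m+3))/γ^(2*m+2))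
      Filter.atTop (nhds (C*γ)) := by
    refine (L3.mul_const γ).congr (fun m => ?_)
    have e : (γ:ℝ)^(2*m+3) = γ^(2*m+2)*γ := by
      rw [show 2*m+3 = (2*m+2)+1 from by omega, pow_succ]
    rw [e]
    have hγn : (γ:ℝ)^(2*m+2) ≠ 0 := pow_ne_zero _ hγne
    field_simp
  have ratio2 : Filter.Tendsto (fun m : ℕ => (G (2*m+5) - G (2*m+3))/(G (2*m+4) - G (2*m+2)))
      Filter.atTop (nhds γ) := by
    have h := num2.div L2 hC0
    have hval : C*γ/C = γ := by field_simp
    rw [hval] at h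
    refine h.congr (fun m => ?_)
    exact div_div_same' _ _ _ (pow_ne_zero _ hγne)
  -- first limit (slope -1/γ)
  have num1 : Filter.Tendsto (fun m : ℕ => (G (2*m+5) - G (2*m+3))/γ^(2*m+4))
      Filter.atTop (nhds (C/γ)) := by
    refine (L3.div_const γ).congr (fun m => ?_)
    have e : (γ:ℝ)^(2*m+4) = γ^(2*m+3)*γ := by
      rw [show 2*m+4 = (2*m+3)+1 from by omega, pow_succ]
    rw [e, div_div]
  have ratio1 : Filter.Tendsto (fun m : ℕ => (G (2*m+5) - G (2*m+3))/(G (2*m+6) - G (2*m+4)))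
      Filter.atTop (nhds (1/γ)) := by
    have h := num1.div L4 hC0
    have hval : (C/γ)/C = 1/γ := by field_simp
    rw [hval] at h
    refine h.congr (fun m => ?_)
    exact div_div_same' _ _ _ (pow_ne_zero _ hγne)
  refine ⟨?_, ?_, div_mul_cancel₀ (-1) hγne⟩
  · have h := ratio1.neg
    have hval : -(1/γ) = -1/γ := by ring
    rw [hval] at h
    refine h.congr (fun m => ?_)
    have hpm : ((-1:ℝ)^m) ≠ 0 := by positivity
    rw [hΓo m, hΓe2 m,
      show G (2*m+4) - G (2*m+6) = -(G (2*m+6) - G (2*m+4)) from by ring,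
      mul_neg, div_neg, mul_div_mul_left _ _ hpm]
  · refine ratio2.congr (fun m => ?_)
    rw [hΓo m, hΓe0 m]
    have hpm : ((-1:ℝ)^m) ≠ 0 := by positivity
    exact (mul_div_mul_left _ _ hpm).symm
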